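/- (Quantitative sensitivity bound) Suppose x ≠ x', and x_i = x'_i for all i ∉ I for a subset I ⊆ Fin n. Then the IDG-Vis score of the full set I satisfies IDGVis(I) ≥ |f(x) − f(x')| / ‖x − x'‖. -/

import Mathlib

open scoped RealInnerProductSpace
open MeasureTheory

noncomputable def dirVec {n : ℕ} (x x' : EuclideanSpace ℝ (Fin n)) (T : Finset (Fin n)) :
    EuclideanSpace ℝ (Fin n) :=
  WithLp.toLp 2 (fun i => if i ∈ T then x i - x' i else 0)

noncomputable def unitDir {n : ℕ} (x x' : EuclideanSpace ℝ (Fin n)) (T : Finset (Fin n)) :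
    EuclideanSpace ℝ (Fin n) :=
  letI := Classical.dec (dirVec x x' T = 0)
  if dirVec x x' T = 0 then 0 else ‖dirVec x x' T‖⁻¹ • dirVec x x' T

noncomputable def dirGrad {n : ℕ} (f : EuclideanSpace ℝ (Fin n) → ℝ)
    (x x' : EuclideanSpace ℝ (Fin n)) (T : Finset (Fin n))
    (y : EuclideanSpace ℝ (Fin n)) : ℝ :=
  |⟪gradient f y, unitDir x x' T⟫|

noncomputable def IDGVis {n : ℕ} (f : EuclideanSpace ℝ (Fin n) → ℝ)
    (x x' : EuclideanSpace ℝ (Fin n)) (T : Finset (Fin n)) : ℝ :=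
  ∫ α in (0:ℝ)..1, dirGrad f x x' T (x' + α • (x - x'))

noncomputable def setAttr {n : ℕ} (f : EuclideanSpace ℝ (Fin n) → ℝ)
    (x x' : EuclideanSpace ℝ (Fin n)) (I : Finset (Fin n)) : ℝ :=
  ∑ T ∈ I.powerset, IDGVis f x x' T

lemma inner_gradient_eq_fderiv {n : ℕ} (f : EuclideanSpace ℝ (Fin n) → ℝ)
    (y v : EuclideanSpace ℝ (Fin n)) : ⟪gradient f y, v⟫ = fderiv ℝ f y v := by
  rw [gradient, InnerProductSpace.toDual_symm_apply]

/-- **Quantitative sensitivity bound.** If `x ≠ x'` and `x` agrees with `x'` outside `I`,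
then `IDGVis(I) ≥ |f(x) - f(x')| / ‖x - x'‖`. -/
theorem idgvis_quantitative_sensitivity {n : ℕ} (hn : 1 ≤ n)
    (f : EuclideanSpace ℝ (Fin n) → ℝ) (hf : ContDiff ℝ 1 f)
    (x x' : EuclideanSpace ℝ (Fin n)) (hxx : x ≠ x')
    (I : Finset (Fin n)) (hagree : ∀ i : Fin n, i ∉ I → x i = x' i) :
    |f x - f x'| / ‖x - x'‖ ≤ IDGVis f x x' I := by
  set v : EuclideanSpace ℝ (Fin n) := x - x' with hv
  have hvne : v ≠ 0 := sub_ne_zero.mpr hxx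
  have hvnorm : (0:ℝ) < ‖v‖ := norm_pos_iff.mpr hvne
  have hdir : dirVec x x' I = v := by
    ext i
    by_cases hi : i ∈ I
    · simp [dirVec, hi, hv, PiLp.sub_apply]
    · simp [dirVec, hi, hv, PiLp.sub_apply, hagree i hi]
  have hunit : unitDir x x' I = ‖v‖⁻¹ • v := by
    rw [unitDir]
    simp [hdir, hvne]
  -- derivative of g α = f (x' + α • v)
  set g' : ℝ → ℝ := fun t => fderiv ℝ f (x' + t • v) v with hg'
  have hderiv : ∀ t : ℝ, HasDerivAt (fun α : ℝ => f (x' + α • v)) (g' t) t := by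
    intro t
    have hline : HasDerivAt (fun α : ℝ => x' + α • v) v t := by
      simpa using ((hasDerivAt_id t).smul_const v).const_add x'
    exact ((hf.differentiable one_ne_zero (x' + t • v)).hasFDerivAt).comp_hasDerivAt t hline
  have hcont : Continuous g' := by
    have h1 : Continuous fun t : ℝ => fderiv ℝ f (x' + t • v) :=
      (hf.continuous_fderiv one_ne_zero).comp (by continuity)
    exact h1.clm_apply continuous_const
  have hFTC : ∫ t in (0:ℝ)..1, g' t = f x - f x' := by
    have := intervalIntegral.integral_eq_sub_of_hasDerivAt
      (f := fun α : ℝ => f (x' + α • v)) (f' := g')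
      (fun t _ => hderiv t) (hcont.intervalIntegrable 0 1)
    simpa [hv] using this
  have habs : |f x - f x'| ≤ ∫ t in (0:ℝ)..1, |g' t| := by
    rw [← hFTC]
    exact intervalIntegral.abs_integral_le_integral_abs zero_le_one
  have hkey : ∀ y, dirGrad f x x' I y = ‖v‖⁻¹ * |fderiv ℝ f y v| := by
    intro y
    rw [dirGrad, hunit, real_inner_smul_right, inner_gradient_eq_fderiv, abs_mul,
      abs_of_nonneg (inv_nonneg.mpr (norm_nonneg v))]
  have hIDG : IDGVis f x x' I = ‖v‖⁻¹ * ∫ t in (0:ℝ)..1, |g' t| := by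
    rw [IDGVis, ← intervalIntegral.integral_const_mul]
    exact intervalIntegral.integral_congr fun t _ => by rw [← hv, hkey]
  rw [div_le_iff₀ hvnorm, hIDG]
  rw [mul_comm, ← mul_assoc, mul_inv_cancel₀ (ne_of_gt hvnorm), one_mul]
  exact habs
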